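/- Every finite SL(2,ℤ)-orbit in the torus ℝ²/ℤ² equals the orbit O_{1/p} of the point (0, 1/p) mod ℤ² for some integer p ≥ 1. -/

import Mathlib

/-- The integer lattice `ℤ² ⊂ ℝ²`, as an additive subgroup of `Fin 2 → ℝ`. -/
def intLattice : AddSubgroup (Fin 2 → ℝ) where
  carrier := {v | ∀ i, ∃ n : ℤ, v i = (n : ℝ)}
  zero_mem' := fun i => ⟨0, by simp⟩
  add_mem' := by
    intro a b ha hb i
    obtain ⟨n, hn⟩ := ha i
    obtain ⟨m, hm⟩ := hb i
    exact ⟨n + m, by simp [hn, hm]⟩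
  neg_mem' := by
    intro a ha i
    obtain ⟨n, hn⟩ := ha i
    exact ⟨-n, by simp [hn]⟩

/-- The torus `ℝ²/ℤ²`. -/
abbrev Torus : Type := (Fin 2 → ℝ) ⧸ intLattice

/-- The natural action of `SL(2,ℤ)` on `ℝ²` by matrix multiplication on column vectors. -/
noncomputable def sl2zAct (A : Matrix.SpecialLinearGroup (Fin 2) ℤ) (v : Fin 2 → ℝ) :
    Fin 2 → ℝ :=
  ((A : Matrix (Fin 2) (Fin 2) ℤ).map fun n => (n : ℝ)).mulVec v

/-- The `SL(2,ℤ)`-orbit of the torus point represented by `v ∈ ℝ²`. -/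
def torusOrbit (v : Fin 2 → ℝ) : Set Torus :=
  {x | ∃ A : Matrix.SpecialLinearGroup (Fin 2) ℤ,
    (QuotientAddGroup.mk (sl2zAct A v) : Torus) = x}

abbrev SL2 := Matrix.SpecialLinearGroup (Fin 2) ℤ

lemma sl2zAct_apply (A : SL2) (v : Fin 2 → ℝ) (i : Fin 2) :
    sl2zAct A v i = ((A : Matrix (Fin 2) (Fin 2) ℤ) i 0 : ℝ) * v 0
      + ((A : Matrix (Fin 2) (Fin 2) ℤ) i 1 : ℝ) * v 1 := by
  simp [sl2zAct, Matrix.mulVec, dotProduct, Fin.sum_univ_two]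

lemma sl2zAct_one (v : Fin 2 → ℝ) : sl2zAct 1 v = v := by
  funext i
  fin_cases i <;> simp [sl2zAct_apply]

lemma sl2zAct_mul (A B : SL2) (v : Fin 2 → ℝ) :
    sl2zAct (A * B) v = sl2zAct A (sl2zAct B v) := by
  unfold sl2zAct
  have : ((A * B : SL2) : Matrix (Fin 2) (Fin 2) ℤ).map (fun n => (n : ℝ))
      = ((A : Matrix (Fin 2) (Fin 2) ℤ).map fun n => (n : ℝ))
        * ((B : Matrix (Fin 2) (Fin 2) ℤ).map fun n => (n : ℝ)) := by
    show ((A * B : SL2) : Matrix (Fin 2) (Fin 2) ℤ).map (Int.castRingHom ℝ) = _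
    rw [Matrix.SpecialLinearGroup.coe_mul, Matrix.map_mul]
    rfl
  rw [this, Matrix.mulVec_mulVec]

lemma sl2zAct_add (A : SL2) (x y : Fin 2 → ℝ) :
    sl2zAct A (x + y) = sl2zAct A x + sl2zAct A y := by
  funext i
  simp [sl2zAct_apply]
  ring

lemma sl2zAct_neg (A : SL2) (x : Fin 2 → ℝ) :
    sl2zAct A (-x) = -sl2zAct A x := by
  funext i
  simp [sl2zAct_apply]
  ring

lemma sl2zAct_lattice (A : SL2) {w : Fin 2 → ℝ} (hw : w ∈ intLattice) :
    sl2zAct A w ∈ intLattice := by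
  intro i
  obtain ⟨n0, h0⟩ := hw 0
  obtain ⟨n1, h1⟩ := hw 1
  exact ⟨(A : Matrix (Fin 2) (Fin 2) ℤ) i 0 * n0 + (A : Matrix (Fin 2) (Fin 2) ℤ) i 1 * n1,
    by push_cast; rw [sl2zAct_apply, h0, h1]⟩

lemma mk_sl2zAct_congr (A : SL2) {x y : Fin 2 → ℝ}
    (h : (QuotientAddGroup.mk x : Torus) = QuotientAddGroup.mk y) :
    (QuotientAddGroup.mk (sl2zAct A x) : Torus) = QuotientAddGroup.mk (sl2zAct A y) := by
  rw [QuotientAddGroup.eq] at h ⊢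
  have := sl2zAct_lattice A h
  rw [sl2zAct_add, sl2zAct_neg] at this
  exact this

lemma torusOrbit_eq_of (v w : Fin 2 → ℝ) (A : SL2)
    (h : (QuotientAddGroup.mk (sl2zAct A v) : Torus) = QuotientAddGroup.mk w) :
    torusOrbit v = torusOrbit w := by
  ext x
  constructor
  · rintro ⟨B, rfl⟩
    refine ⟨B * A⁻¹, ?_⟩
    have h2 := mk_sl2zAct_congr (B * A⁻¹) h
    rw [← sl2zAct_mul] at h2
    rw [← h2]
    congr 1
    rw [mul_assoc, inv_mul_cancel, mul_one]
  · rintro ⟨C, rfl⟩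
    refine ⟨C * A, ?_⟩
    rw [sl2zAct_mul]
    exact mk_sl2zAct_congr C h

-- T k = !![1,k;0,1], S k = !![1,0;k,1]
def Tmat (k : ℤ) : SL2 := ⟨!![1, k; 0, 1], by simp [Matrix.det_fin_two_of]⟩
def Smat (k : ℤ) : SL2 := ⟨!![1, 0; k, 1], by simp [Matrix.det_fin_two_of]⟩

lemma exists_int_mul (v : Fin 2 → ℝ) (hfin : (torusOrbit v).Finite) (i : Fin 2) :
    ∃ m : ℤ, m ≠ 0 ∧ ∃ a : ℤ, m * v i = a := by
  classical
  set M : ℤ → SL2 := fun k => if i = 1 then Tmat k else Smat k with hM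
  set f : ℤ → Torus := fun k => QuotientAddGroup.mk (sl2zAct (M k) v) with hf
  have hmaps : Set.MapsTo f Set.univ (torusOrbit v) := fun k _ => ⟨M k, rfl⟩
  obtain ⟨k, -, l, -, hkl, hfe⟩ :=
    Set.infinite_univ.exists_ne_map_eq_of_mapsTo hmaps hfin
  rw [hf] at hfe
  simp only at hfe
  rw [QuotientAddGroup.eq] at hfe
  refine ⟨l - k, sub_ne_zero.mpr fun h => hkl h.symm, ?_⟩
  fin_cases i
  · -- use Smat; component 1 of difference is (l-k) v 0
    simp only [hM, if_neg (by decide : ¬ ((0:Fin 2) = 1))] at hfe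
    obtain ⟨a, ha⟩ := hfe 1
    refine ⟨a, ?_⟩
    rw [← ha]
    simp only [Pi.add_apply, Pi.neg_apply, sl2zAct_apply]
    simp [sl2zAct_apply, Smat, Matrix.cons_val_zero, Matrix.cons_val_one]
    ring
  · simp only [hM, if_pos rfl] at hfe
    obtain ⟨a, ha⟩ := hfe 0
    refine ⟨a, ?_⟩
    rw [← ha]
    simp only [Pi.add_apply, Pi.neg_apply, sl2zAct_apply]
    simp [sl2zAct_apply, Tmat, Matrix.cons_val_zero, Matrix.cons_val_one]
    ring

lemma stepA (a b : ℤ) : ∃ B : SL2,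
    (B : Matrix (Fin 2) (Fin 2) ℤ).mulVec ![a, b] = ![0, (Int.gcd a b : ℤ)] := by
  by_cases hD : (Int.gcd a b : ℤ) = 0
  · have ha : a = 0 := by
      have := Int.gcd_eq_zero_iff.mp (by exact_mod_cast hD)
      exact this.1
    have hb : b = 0 := by
      have := Int.gcd_eq_zero_iff.mp (by exact_mod_cast hD)
      exact this.2
    refine ⟨1, ?_⟩
    subst ha hb
    funext i
    fin_cases i <;> simp [Matrix.mulVec, dotProduct, Fin.sum_univ_two, hD]
  · set D : ℤ := (Int.gcd a b : ℤ) with hDdef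
    obtain ⟨a1, ha1⟩ : D ∣ a := Int.gcd_dvd_left a b
    obtain ⟨b1, hb1⟩ : D ∣ b := Int.gcd_dvd_right a b
    set x := Int.gcdA a b with hx
    set y := Int.gcdB a b with hy
    have hbez : D = a * x + b * y := Int.gcd_eq_gcd_ab a b
    have hkey : a1 * x + b1 * y = 1 := by
      have h2 : D * (a1 * x + b1 * y) = D * 1 := by
        rw [ha1, hb1] at hbez
        ring_nf
        ring_nf at hbez
        linarith
      exact mul_left_cancel₀ hD h2
    refine ⟨⟨!![b1, -a1; x, y], by
      simp [Matrix.det_fin_two_of]; linarith [hkey]⟩, ?_⟩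
    funext i
    fin_cases i <;>
      simp [Matrix.mulVec, dotProduct, Fin.sum_univ_two, ha1, hb1] <;> ring_nf
    · nlinarith [hkey]

lemma stepC (c m : ℤ) (hg : Int.gcd c m = 1) : ∃ C : SL2, ∃ k0 k1 : ℤ,
    (C : Matrix (Fin 2) (Fin 2) ℤ).mulVec ![0, c] = ![m * k0, 1 + m * k1] := by
  set u := Int.gcdA c m with hu
  set t := Int.gcdB c m with ht
  have hbez : c * u + m * t = 1 := by
    have := Int.gcd_eq_gcd_ab c m
    rw [hg] at this
    exact_mod_cast this.symm
  have hum : Int.gcd u m = 1 := by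
    have : IsCoprime u m := ⟨c, t, by linarith⟩
    exact Int.isCoprime_iff_gcd_eq_one.mp this
  set p := Int.gcdA u m with hp
  set q := Int.gcdB u m with hq
  have hbez2 : u * p + m * q = 1 := by
    have := Int.gcd_eq_gcd_ab u m
    rw [hum] at this
    exact_mod_cast this.symm
  refine ⟨⟨!![p, -(q * m); 1, u], by simp [Matrix.det_fin_two_of]; linarith⟩,
    -q * c, -t, ?_⟩
  funext i
  fin_cases i <;>
    simp [Matrix.mulVec, dotProduct, Fin.sum_univ_two] <;> nlinarith [hbez]

lemma exists_pos_int_mul (v : Fin 2 → ℝ) (hfin : (torusOrbit v).Finite) (i : Fin 2) :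
    ∃ m : ℤ, 0 < m ∧ ∃ a : ℤ, (m : ℝ) * v i = a := by
  obtain ⟨m, hm, a, ha⟩ := exists_int_mul v hfin i
  rcases lt_or_gt_of_ne hm with h | h
  · refine ⟨-m, by linarith, -a, ?_⟩
    push_cast
    linarith [ha]
  · exact ⟨m, h, a, ha⟩


/-- Every finite `SL(2,ℤ)`-orbit in the torus `ℝ²/ℤ²` equals the orbit `O_{1/p}` of the
point `(0, 1/p) mod ℤ²` for some integer `p ≥ 1`. -/
theorem finite_orbit_eq_orbit_one_div (v : Fin 2 → ℝ) (hfin : (torusOrbit v).Finite) :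
    ∃ p : ℕ, 1 ≤ p ∧ torusOrbit v = torusOrbit ![0, 1 / (p : ℝ)] := by
  obtain ⟨m0, hm0, a0, ha0⟩ := exists_pos_int_mul v hfin 0
  obtain ⟨m1, hm1, b1, hb1⟩ := exists_pos_int_mul v hfin 1
  set n : ℤ := m0 * m1 with hn
  have hnpos : 0 < n := mul_pos hm0 hm1
  have hnR : (n : ℝ) ≠ 0 := by positivity
  set a : ℤ := m1 * a0 with hadef
  set b : ℤ := m0 * b1 with hbdef
  have hv0 : v 0 = (a : ℝ) / n := by
    rw [eq_div_iff hnR, hn, hadef]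
    push_cast
    linear_combination (m1 : ℝ) * ha0
  have hv1 : v 1 = (b : ℝ) / n := by
    rw [eq_div_iff hnR, hn, hbdef]
    push_cast
    linear_combination (m0 : ℝ) * hb1
  -- Step A : map v to ![0, D/n]
  obtain ⟨B, hB⟩ := stepA a b
  set D : ℤ := (Int.gcd a b : ℤ) with hDdef
  have hBv : sl2zAct B v = ![0, (D : ℝ) / n] := by
    funext i
    rw [sl2zAct_apply, hv0, hv1]
    have hC := congrFun hB i
    simp only [Matrix.mulVec, dotProduct, Fin.sum_univ_two, Matrix.cons_val_zero,
      Matrix.cons_val_one, Matrix.head_cons] at hC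
    have hCR : ((B : Matrix (Fin 2) (Fin 2) ℤ) i 0 : ℝ) * a
        + ((B : Matrix (Fin 2) (Fin 2) ℤ) i 1 : ℝ) * b = ((![0, D] i : ℤ) : ℝ) := by
      exact_mod_cast congrArg (fun z : ℤ => (z : ℝ)) hC
    have hvec : (![0, (D : ℝ) / n] : Fin 2 → ℝ) i = ((![0, D] i : ℤ) : ℝ) / n := by
      fin_cases i <;> simp
    rw [hvec, eq_div_iff hnR]
    field_simp
    linear_combination hCR
  have horb1 : torusOrbit v = torusOrbit ![0, (D : ℝ) / n] :=
    torusOrbit_eq_of _ _ B (by rw [hBv])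
  -- Step B : reduce the fraction
  set g : ℤ := (Int.gcd D n : ℤ) with hgdef
  have hgpos : 0 < Int.gcd D n := Int.gcd_pos_iff.mpr (Or.inr (by exact_mod_cast hnpos.ne'))
  have hgposZ : 0 < g := hgdef ▸ (by exact_mod_cast hgpos : (0:ℤ) < ((Int.gcd D n : ℕ) : ℤ))
  set c : ℤ := D / g with hcdef
  set m : ℤ := n / g with hmdef
  have hdvdD : g ∣ D := Int.gcd_dvd_left D n
  have hdvdn : g ∣ n := Int.gcd_dvd_right D n
  have hDc : D = g * c := (Int.mul_ediv_cancel' hdvdD).symm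
  have hnm : n = g * m := (Int.mul_ediv_cancel' hdvdn).symm
  have hmpos : 0 < m := by
    have h : 0 < g * m := hnm ▸ hnpos
    nlinarith [hgposZ]
  have hmR : (m : ℝ) ≠ 0 := by positivity
  have hgR : (g : ℝ) ≠ 0 := by positivity
  have hfrac : (D : ℝ) / n = (c : ℝ) / m := by
    rw [hDc, hnm]
    push_cast
    rw [mul_div_mul_left _ _ hgR]
  have hgcd_cm : Int.gcd c m = 1 := Int.gcd_div_gcd_div_gcd hgpos
  -- Step C : map ![0, c/m] to ![0, 1/m]
  obtain ⟨C, k0, k1, hCeq⟩ := stepC c m hgcd_cm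
  have hCv : sl2zAct C ![0, (c : ℝ) / m] = ![(k0 : ℝ), 1 / m + k1] := by
    funext i
    rw [sl2zAct_apply]
    have hC := congrFun hCeq i
    simp only [Matrix.mulVec, dotProduct, Fin.sum_univ_two, Matrix.cons_val_zero,
      Matrix.cons_val_one, Matrix.head_cons] at hC
    have hCR : ((C : Matrix (Fin 2) (Fin 2) ℤ) i 0 : ℝ) * 0
        + ((C : Matrix (Fin 2) (Fin 2) ℤ) i 1 : ℝ) * c = ((![m * k0, 1 + m * k1] i : ℤ) : ℝ) := by
      exact_mod_cast congrArg (fun z : ℤ => (z : ℝ)) hC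
    have hvec : (![(k0 : ℝ), 1 / m + k1] : Fin 2 → ℝ) i
        = ((![m * k0, 1 + m * k1] i : ℤ) : ℝ) / m := by
      fin_cases i <;> push_cast <;> field_simp
    rw [hvec, eq_div_iff hmR]
    have h0 : (0 : ℝ) = (0 : ℤ) / (m:ℝ) := by simp
    simp only [Matrix.cons_val_zero, Matrix.cons_val_one, Matrix.head_cons]
    field_simp
    linear_combination hCR
  have horb2 : torusOrbit ![0, (c : ℝ) / m] = torusOrbit ![0, 1 / (m : ℝ)] := by
    refine torusOrbit_eq_of _ _ C ?_
    rw [hCv, QuotientAddGroup.eq]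
    intro i
    fin_cases i
    · exact ⟨-k0, by simp⟩
    · refine ⟨-k1, by push_cast; simp⟩
  refine ⟨m.toNat, by omega, ?_⟩
  have hmt : ((m.toNat : ℕ) : ℝ) = (m : ℝ) := by
    exact_mod_cast congrArg (fun z : ℤ => (z : ℝ)) (Int.toNat_of_nonneg hmpos.le)
  rw [horb1, hfrac, horb2, hmt]
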